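/- Let p be an odd prime, let n be a positive integer, and let S be a subset of Z_n with 0 ∉ S, S = −S, |S| = p − 1, and S generating Z_n. If the circulant graph Cay(Z_n, S) admits a perfect code, then the p-th cyclotomic polynomial λ_p(x) divides the polynomial f_{S∪{0}}(x) in Z[x]. -/

import Mathlib

open Polynomial Finset

lemma keyC (p q : ℕ) (hp : p.Prime) (hq0 : 0 < q)
    (T : Finset ℕ) (hT : T.card = p) (h0 : 0 ∈ T)
    (hdvd : (∑ i ∈ Finset.range p, (X:ℤ[X])^(q*i)) ∣ ∑ e ∈ T, (X:ℤ[X])^e) :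
    ∀ e ∈ T, q ∣ e := by
  set Q := q * p with hQdef
  have hp1 : 1 < p := hp.one_lt
  have hQ0 : 0 < Q := Nat.mul_pos hq0 hp.pos
  set lam : ℤ[X] := ∑ i ∈ Finset.range p, (X:ℤ[X])^(q*i) with hlam
  have hlammul : lam * ((X:ℤ[X])^q - 1) = (X:ℤ[X])^Q - 1 := by
    have := geom_sum_mul ((X:ℤ[X])^q) p
    simpa [hlam, ← pow_mul, hQdef, mul_comm] using this
  -- X^Q - 1 divides X^e - X^(e % Q)
  have hmono : ∀ e : ℕ, ((X:ℤ[X])^Q - 1) ∣ ((X:ℤ[X])^e - X^(e % Q)) := by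
    intro e
    have he : (X:ℤ[X])^e = ((X:ℤ[X])^Q)^(e / Q) * X^(e % Q) := by
      rw [← pow_mul, ← pow_add, Nat.div_add_mod]
    rw [he]
    have : (X:ℤ[X])^Q - 1 ∣ ((X:ℤ[X])^Q)^(e/Q) - 1 := by
      simpa using sub_dvd_pow_sub_pow ((X:ℤ[X])^Q) 1 (e/Q)
    calc (X:ℤ[X])^Q - 1 ∣ (((X:ℤ[X])^Q)^(e/Q) - 1) * X^(e % Q) := this.mul_right _
      _ = ((X:ℤ[X])^Q)^(e / Q) * X^(e % Q) - X^(e % Q) := by ring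
  set r : ℤ[X] := ∑ e ∈ T, (X:ℤ[X])^(e % Q) with hr
  have hlamr : lam ∣ r := by
    have h1 : lam ∣ (∑ e ∈ T, (X:ℤ[X])^e) - r := by
      rw [hr, ← Finset.sum_sub_distrib]
      refine Finset.dvd_sum fun e he => dvd_trans ?_ (hmono e)
      exact ⟨_, hlammul.symm⟩
    simpa using dvd_sub hdvd h1
  -- coefficients of r
  have hrcoeff : ∀ m, r.coeff m = ((T.filter (fun e => e % Q = m)).card : ℤ) := by
    intro m
    rw [hr, finset_sum_coeff]
    simp only [coeff_X_pow]
    rw [Finset.card_filter]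
    push_cast
    exact Finset.sum_congr rfl fun x _ => by simp [eq_comm]
  have hrnonneg : ∀ m, 0 ≤ r.coeff m := fun m => by rw [hrcoeff]; positivity
  have hrbig : ∀ m, Q ≤ m → r.coeff m = 0 := by
    intro m hm
    rw [hrcoeff]
    norm_cast
    rw [Finset.card_eq_zero]
    refine Finset.filter_eq_empty_iff.mpr fun e _ => ?_
    exact fun hc => absurd (hc ▸ Nat.mod_lt e hQ0) (not_lt.mpr hm)
  have hreval : r.eval 1 = (p : ℤ) := by
    rw [hr]
    simp [eval_finset_sum, hT]
  have hlameval : lam.eval 1 = (p : ℤ) := by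
    rw [hlam]; simp [eval_finset_sum]
  have hr0 : r ≠ 0 := fun hc => by
    rw [hc] at hreval; simp at hreval; omega
  -- lam is monic of degree Q - q
  have hXq : ((X:ℤ[X])^q - 1) = (X:ℤ[X])^q - C 1 := by simp
  have hmonXq : ((X:ℤ[X])^q - 1).Monic := by rw [hXq]; exact monic_X_pow_sub_C 1 hq0.ne'
  have hmonXQ : ((X:ℤ[X])^Q - 1).Monic := by
    have : ((X:ℤ[X])^Q - 1) = (X:ℤ[X])^Q - C 1 := by simp
    rw [this]; exact monic_X_pow_sub_C 1 hQ0.ne'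
  have hlam0 : lam ≠ 0 := by
    intro hc
    rw [hc, zero_mul] at hlammul
    exact hmonXQ.ne_zero hlammul.symm
  have hlammon : lam.Monic := by
    have := leadingCoeff_mul lam ((X:ℤ[X])^q - 1)
    rw [hlammul, hmonXQ.leadingCoeff, hmonXq.leadingCoeff, mul_one] at this
    exact this.symm
  have hdeglam : lam.natDegree = Q - q := by
    have h1 := natDegree_mul hlam0 hmonXq.ne_zero
    rw [hlammul] at h1
    have h2 : ((X:ℤ[X])^Q - 1).natDegree = Q := by
      have : ((X:ℤ[X])^Q - 1) = (X:ℤ[X])^Q - C 1 := by simp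
      rw [this]; exact natDegree_X_pow_sub_C
    have h3 : ((X:ℤ[X])^q - 1).natDegree = q := by
      rw [hXq]; exact natDegree_X_pow_sub_C
    omega
  obtain ⟨h, hh⟩ := hlamr
  have hh0 : h ≠ 0 := fun hc => hr0 (by rw [hh, hc, mul_zero])
  have hdegr : r.natDegree < Q := by
    rw [Polynomial.natDegree_lt_iff_degree_lt hr0]
    exact (Polynomial.degree_lt_iff_coeff_zero r Q).mpr
      (fun m hm => hrbig m (by exact_mod_cast hm))
  have hdegh : h.natDegree < q := by
    have := natDegree_mul hlam0 hh0
    rw [← hh] at this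
    have hqQ : q ≤ Q := Nat.le_mul_of_pos_right q hp.pos
    omega
  -- coefficients of h below q agree with those of r
  have hcoeffh : ∀ t, t < q → h.coeff t = r.coeff t := by
    intro t ht
    rw [hh, hlam, Finset.sum_mul, finset_sum_coeff]
    rw [Finset.sum_eq_single 0]
    · simp
    · intro i hi hne
      rw [coeff_X_pow_mul']
      rw [if_neg]
      have : q ≤ q * i := Nat.le_mul_of_pos_right q (Nat.pos_of_ne_zero hne)
      omega
    · intro hc
      exact absurd (Finset.mem_range.mpr hp.pos) hc
  have hhnonneg : ∀ t, 0 ≤ h.coeff t := by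
    intro t
    rcases lt_or_ge t q with ht | ht
    · rw [hcoeffh t ht]; exact hrnonneg t
    · rw [coeff_eq_zero_of_natDegree_lt (lt_of_lt_of_le hdegh ht)]
  have hh00 : 1 ≤ h.coeff 0 := by
    rw [hcoeffh 0 hq0, hrcoeff]
    have : 0 ∈ T.filter (fun e => e % Q = 0) := by
      simp [h0]
    have := Finset.card_pos.mpr ⟨0, this⟩
    exact_mod_cast this
  have hheval : h.eval 1 = 1 := by
    have : lam.eval 1 * h.eval 1 = (p:ℤ) := by rw [← eval_mul, ← hh, hreval]
    rw [hlameval] at this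
    have hpne : (p:ℤ) ≠ 0 := by exact_mod_cast hp.pos.ne'
    replace this := mul_left_cancel₀ hpne (this.trans (mul_one _).symm)
    linarith [this]
  have hhone : h = 1 := by
    have hsum : ∑ t ∈ Finset.range (h.natDegree + 1), h.coeff t = 1 := by
      have := Polynomial.eval_eq_sum_range (x := (1:ℤ)) (p := h)
      simp at this
      rw [← this, hheval]
    have hzero : ∀ t ∈ Finset.range (h.natDegree + 1), t ≠ 0 → h.coeff t = 0 := by
      have hsplit : h.coeff 0 + ∑ t ∈ (Finset.range (h.natDegree + 1)).erase 0,
          h.coeff t = 1 := by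
        rw [← hsum, Finset.add_sum_erase _ _ (Finset.mem_range.mpr (Nat.succ_pos _))]
      have hrest : ∑ t ∈ (Finset.range (h.natDegree + 1)).erase 0, h.coeff t = 0 := by
        have hge : 0 ≤ ∑ t ∈ (Finset.range (h.natDegree + 1)).erase 0, h.coeff t :=
          Finset.sum_nonneg fun t _ => hhnonneg t
        omega
      intro t htmem htne
      have := (Finset.sum_eq_zero_iff_of_nonneg (fun t _ => hhnonneg t)).mp hrest
      exact this t (Finset.mem_erase.mpr ⟨htne, htmem⟩)
    ext t
    rcases Nat.eq_zero_or_pos t with rfl | ht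
    · have hsplit : h.coeff 0 + ∑ t ∈ (Finset.range (h.natDegree + 1)).erase 0,
          h.coeff t = 1 := by
        rw [← hsum, Finset.add_sum_erase _ _ (Finset.mem_range.mpr (Nat.succ_pos _))]
      have hge : 0 ≤ ∑ t ∈ (Finset.range (h.natDegree + 1)).erase 0, h.coeff t :=
        Finset.sum_nonneg fun t _ => hhnonneg t
      norm_num [coeff_one]
      omega
    · rcases lt_or_ge h.natDegree t with hd | hd
      · rw [coeff_eq_zero_of_natDegree_lt hd]
        simp [coeff_one, ht.ne']
      · rw [hzero t (Finset.mem_range.mpr (by omega)) ht.ne']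
        simp [coeff_one, ht.ne']
  have hrlam : r = lam := by rw [hh, hhone, mul_one]
  -- conclude
  intro e he
  have hfe : 1 ≤ r.coeff (e % Q) := by
    rw [hrcoeff]
    have : e ∈ T.filter (fun x => x % Q = e % Q) := by simp [he]
    have := Finset.card_pos.mpr ⟨e, this⟩
    exact_mod_cast this
  have hlamco : lam.coeff (e % Q) ≠ 0 := by rw [← hrlam]; omega
  have : ∃ i ∈ Finset.range p, e % Q = q * i := by
    by_contra hc
    push_neg at hc
    apply hlamco
    rw [hlam, finset_sum_coeff]
    refine Finset.sum_eq_zero fun i hi => ?_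
    rw [coeff_X_pow, if_neg (fun hx => hc i hi hx)]
  obtain ⟨i, _, hieq⟩ := this
  have hq1 : q ∣ e % Q := ⟨i, hieq⟩
  have hq2 : q ∣ Q := ⟨p, rfl⟩
  have hdm := Nat.div_add_mod e Q
  have : q ∣ Q * (e / Q) + e % Q := Nat.dvd_add (hq2.mul_right _) hq1
  rwa [hdm] at this

open Polynomial Finset

lemma tiling_poly (n : ℕ) [NeZero n] (A B : Finset (ZMod n))
    (huniq : ∀ v : ZMod n, ∃! q : ZMod n × ZMod n, q ∈ A ×ˢ B ∧ q.1 + q.2 = v) :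
    ((X:ℤ[X])^n - 1) ∣
      (∑ a ∈ A, (X:ℤ[X])^a.val) * (∑ b ∈ B, (X:ℤ[X])^b.val)
        - ∑ j ∈ Finset.range n, (X:ℤ[X])^j := by
  have hn : 0 < n := Nat.pos_of_ne_zero (NeZero.ne n)
  have hG : True := trivial
  set φ : ℤ[X] →ₐ[ℤ] AddMonoidAlgebra ℤ (ZMod n) :=
    Polynomial.aeval (AddMonoidAlgebra.single (1 : ZMod n) (1:ℤ)) with hφ
  have hφpow : ∀ m : ℕ, φ ((X:ℤ[X])^m) = AddMonoidAlgebra.single ((m : ZMod n)) (1:ℤ) := by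
    intro m
    rw [hφ, map_pow, aeval_X, AddMonoidAlgebra.single_pow, one_pow]
    congr 1
    simp [nsmul_eq_mul]
  -- tiling identity in the group algebra
  have htile : (∑ a ∈ A, AddMonoidAlgebra.single a (1:ℤ)) *
      (∑ b ∈ B, AddMonoidAlgebra.single b (1:ℤ)) =
      ∑ z : ZMod n, AddMonoidAlgebra.single z (1:ℤ) := by
    rw [Finset.sum_mul_sum]
    have hstep : ∀ a ∈ A, ∀ b ∈ B, True := fun _ _ _ _ => trivial
    rw [← Finset.sum_product']
    refine Finset.sum_bij (fun q _ => q.1 + q.2) (fun q _ => Finset.mem_univ _) ?_ ?_ ?_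
    · intro q1 hq1 q2 hq2 heq
      obtain ⟨q0, _, huq⟩ := huniq (q1.1 + q1.2)
      rw [huq q1 ⟨hq1, rfl⟩, huq q2 ⟨hq2, heq.symm⟩]
    · intro z _
      obtain ⟨q0, ⟨hq0mem, hq0sum⟩, _⟩ := huniq z
      exact ⟨q0, hq0mem, hq0sum⟩
    · intro q hq
      rw [AddMonoidAlgebra.single_mul_single, mul_one]
  -- transfer to polynomials
  have hφA : φ (∑ a ∈ A, (X:ℤ[X])^a.val) = ∑ a ∈ A, AddMonoidAlgebra.single a (1:ℤ) := by
    rw [map_sum]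
    exact Finset.sum_congr rfl fun a _ => by rw [hφpow, ZMod.natCast_zmod_val]
  have hφB : φ (∑ b ∈ B, (X:ℤ[X])^b.val) = ∑ b ∈ B, AddMonoidAlgebra.single b (1:ℤ) := by
    rw [map_sum]
    exact Finset.sum_congr rfl fun b _ => by rw [hφpow, ZMod.natCast_zmod_val]
  have hφZ : φ (∑ j ∈ Finset.range n, (X:ℤ[X])^j) = ∑ z : ZMod n, AddMonoidAlgebra.single z (1:ℤ) := by
    rw [map_sum]
    rw [Finset.sum_congr rfl fun j _ => hφpow j]
    refine Finset.sum_nbij' (fun j => (j : ZMod n)) (fun z => z.val) ?_ ?_ ?_ ?_ ?_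
    · intro j _; exact Finset.mem_univ _
    · intro z _; exact Finset.mem_range.mpr (ZMod.val_lt z)
    · intro j hj; exact ZMod.val_cast_of_lt (Finset.mem_range.mp hj)
    · intro z _; exact ZMod.natCast_zmod_val z
    · intro j _; rfl
  set d : ℤ[X] := (∑ a ∈ A, (X:ℤ[X])^a.val) * (∑ b ∈ B, (X:ℤ[X])^b.val)
      - ∑ j ∈ Finset.range n, (X:ℤ[X])^j with hd
  have hφd : φ d = 0 := by
    rw [hd, map_sub, map_mul, hφA, hφB, hφZ, htile, sub_self]
  -- the monic modulus
  have hmon : ((X:ℤ[X])^n - C 1).Monic := monic_X_pow_sub_C 1 hn.ne'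
  have hφmod : φ ((X:ℤ[X])^n - C 1) = 0 := by
    rw [map_sub, hφpow n, aeval_C]
    have : ((n : ZMod n)) = 0 := by exact_mod_cast ZMod.natCast_self n
    rw [this]
    have halg : (algebraMap ℤ (AddMonoidAlgebra ℤ (ZMod n))) 1 = AddMonoidAlgebra.single 0 1 := by
      rw [AddMonoidAlgebra.coe_algebraMap]
      simp
    rw [halg, sub_self]
  set r : ℤ[X] := d %ₘ ((X:ℤ[X])^n - C 1) with hrdef
  have hφr : φ r = 0 := by
    have := Polynomial.modByMonic_add_div d ((X:ℤ[X])^n - C 1)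
    have h2 : φ r + φ ((X:ℤ[X])^n - C 1) * φ (d /ₘ ((X:ℤ[X])^n - C 1)) = φ d := by
      rw [← map_mul, ← map_add, this]
    rw [hφd, hφmod, zero_mul, add_zero] at h2
    exact h2
  have hdeg' : r.degree < (n : ℕ) := by
    have := Polynomial.degree_modByMonic_lt d hmon
    rwa [degree_X_pow_sub_C hn] at this
  have hr0 : r = 0 := by
    by_contra h0
    have hdn : r.natDegree < n := by
      rw [Polynomial.natDegree_lt_iff_degree_lt h0]
      exact hdeg'
    have h1 : φ r = ∑ i ∈ Finset.range n, AddMonoidAlgebra.single ((i : ZMod n)) (r.coeff i) := by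
      conv_lhs => rw [Polynomial.as_sum_range' r n hdn]
      rw [map_sum]
      refine Finset.sum_congr rfl fun i _ => ?_
      rw [← Polynomial.smul_X_eq_monomial, map_smul, hφpow]
      rw [AddMonoidAlgebra.smul_single]
      simp
    have key : ∀ j, j < n → r.coeff j = 0 := by
      intro j hj
      have h2 : (φ r).coeff ((j : ZMod n)) = 0 := by rw [hφr]; rfl
      rw [h1, AddMonoidAlgebra.coeff_sum, Finsupp.finset_sum_apply] at h2
      simp only [AddMonoidAlgebra.coeff_single, Finsupp.single_apply] at h2
      rw [Finset.sum_eq_single j] at h2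
      · simpa using h2
      · intro i hi hne
        rw [if_neg]
        intro hc
        apply hne
        have := congrArg (ZMod.val) hc
        rwa [ZMod.val_cast_of_lt (Finset.mem_range.mp hi), ZMod.val_cast_of_lt hj] at this
      · intro hc
        exact absurd (Finset.mem_range.mpr hj) hc
    apply h0
    ext j
    rcases lt_or_ge j n with hj | hj
    · simpa using key j hj
    · simp [coeff_eq_zero_of_natDegree_lt (lt_of_lt_of_le hdn hj)]
  have hdvd' : ((X:ℤ[X])^n - C 1) ∣ d := (Polynomial.modByMonic_eq_zero_iff_dvd hmon).mp hr0
  simpa using hdvd'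

lemma gen_contra (p n : ℕ) (hp : p.Prime) (hpn : p ∣ n) [NeZero n]
    (S : Finset (ZMod n)) (hall : ∀ s ∈ S, p ∣ s.val)
    (hgen : AddSubgroup.closure (S : Set (ZMod n)) = ⊤) : False := by
  haveI : Fact (1 < p) := ⟨hp.one_lt⟩
  set g : ZMod n →+ ZMod p := (ZMod.castHom hpn (ZMod p)).toAddMonoidHom with hg
  have hker : ∀ s ∈ S, g s = 0 := by
    intro s hs
    have h1 : s = ((s.val : ℕ) : ZMod n) := (ZMod.natCast_zmod_val s).symm
    rw [hg]
    simp only [RingHom.toAddMonoidHom_eq_coe, AddMonoidHom.coe_coe]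
    rw [h1, map_natCast]
    exact (ZMod.natCast_eq_zero_iff _ _).mpr (hall s hs)
  have hle : AddSubgroup.closure (S : Set (ZMod n)) ≤ g.ker := by
    rw [AddSubgroup.closure_le]
    intro s hs
    exact hker s hs
  rw [hgen] at hle
  have h1 : g 1 = 0 := hle (AddSubgroup.mem_top 1)
  have h2 : g 1 = 1 := by
    rw [hg]
    simp only [RingHom.toAddMonoidHom_eq_coe, AddMonoidHom.coe_coe]
    exact map_one _
  rw [h1] at h2
  exact one_ne_zero h2.symm

theorem cyclotomic_prime_dvd_fS_of_perfectCode'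
    (p n : ℕ) (hp : p.Prime) (hodd : Odd p) (hn : 0 < n)
    (S : Finset (ZMod n)) (h0S : (0 : ZMod n) ∉ S) (hSneg : ∀ s ∈ S, -s ∈ S)
    (hcard : S.card = p - 1)
    (hgen : AddSubgroup.closure (S : Set (ZMod n)) = ⊤)
    (hex : ∃ C : Set (ZMod n), (∀ u ∈ C, ∀ v ∈ C, ¬ (SimpleGraph.fromRel (fun u v => v - u ∈ S)).Adj u v) ∧ ∀ v, v ∉ C → ∃! c, c ∈ C ∧ (SimpleGraph.fromRel (fun u v => v - u ∈ S)).Adj v c) :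
    Polynomial.cyclotomic p ℤ ∣ ∑ s ∈ insert (0 : ZMod n) S, (X : ℤ[X]) ^ s.val := by
  classical
  haveI : NeZero n := ⟨hn.ne'⟩
  obtain ⟨C, hCind, hCdom⟩ := hex
  have hp3 : 3 ≤ p := by
    rcases hp.eq_two_or_odd with h2 | _
    · exact absurd (h2 ▸ hodd) (by decide)
    · have := hp.two_le
      omega
  -- symmetric adjacency
  have hadj : ∀ u v : ZMod n, (SimpleGraph.fromRel (fun u v => v - u ∈ S)).Adj u v ↔
      u ≠ v ∧ v - u ∈ S := by
    intro u v
    rw [SimpleGraph.fromRel_adj]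
    constructor
    · rintro ⟨hne, h | h⟩
      · exact ⟨hne, h⟩
      · refine ⟨hne, ?_⟩
        have := hSneg _ h
        rwa [neg_sub] at this
    · rintro ⟨hne, h⟩
      exact ⟨hne, Or.inl h⟩
  haveI : Fintype ↑C := Fintype.ofFinite _
  -- the unique-representation property
  have huniq : ∀ v : ZMod n, ∃! q : ZMod n × ZMod n,
      q ∈ C.toFinset ×ˢ insert (0 : ZMod n) S ∧ q.1 + q.2 = v := by
    intro v
    by_cases hv : v ∈ C
    · refine ⟨(v, 0), ⟨Finset.mem_product.mpr
        ⟨Set.mem_toFinset.mpr hv, Finset.mem_insert_self _ _⟩, by simp⟩, ?_⟩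
      rintro ⟨c, s⟩ ⟨hmem, hsum⟩
      rw [Finset.mem_product] at hmem
      obtain ⟨hc, hs⟩ := hmem
      have hcC : c ∈ C := Set.mem_toFinset.mp hc
      simp only at hsum
      rcases Finset.mem_insert.mp hs with rfl | hsS
      · simp only [add_zero] at hsum
        rw [hsum]
      · exfalso
        have hsne : s ≠ 0 := fun hc0 => h0S (hc0 ▸ hsS)
        have hs0 : s = v - c := by rw [← hsum]; ring
        have hcv : c ≠ v := by
          rintro rfl
          exact hsne (by rw [hs0, sub_self])
        have : (SimpleGraph.fromRel (fun u v => v - u ∈ S)).Adj c v := by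
          rw [hadj]
          exact ⟨hcv, by rw [← hs0]; exact hsS⟩
        exact hCind c hcC v hv this
    · obtain ⟨c, ⟨hcC, hcadj⟩, hcuniq⟩ := hCdom v hv
      rw [hadj] at hcadj
      obtain ⟨hvc, hcvS⟩ := hcadj
      have hvcS : v - c ∈ S := by
        have := hSneg _ hcvS
        rwa [neg_sub] at this
      refine ⟨(c, v - c), ⟨Finset.mem_product.mpr
        ⟨Set.mem_toFinset.mpr hcC, Finset.mem_insert_of_mem hvcS⟩, by simp⟩, ?_⟩
      rintro ⟨c', s'⟩ ⟨hmem, hsum⟩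
      rw [Finset.mem_product] at hmem
      obtain ⟨hc', hs'⟩ := hmem
      have hc'C : c' ∈ C := Set.mem_toFinset.mp hc'
      simp only at hsum
      rcases Finset.mem_insert.mp hs' with rfl | hs'S
      · exfalso
        simp only [add_zero] at hsum
        exact hv (hsum ▸ hc'C)
      · have hvc' : v - c' = s' := by rw [← hsum]; ring
        have hc'ne : v ≠ c' := by
          rintro rfl
          exact hv hc'C
        have hadjvc' : (SimpleGraph.fromRel (fun u v => v - u ∈ S)).Adj v c' := by
          rw [hadj]
          refine ⟨fun hc => hc'ne hc, ?_⟩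
          have := hSneg _ (hvc' ▸ hs'S)
          rwa [neg_sub] at this
        have hceq : c' = c := hcuniq c' ⟨hc'C, hadjvc'⟩
        subst hceq
        rw [hvc']
  -- polynomial setup
  set fC : ℤ[X] := ∑ a ∈ C.toFinset, (X:ℤ[X])^a.val with hfC
  set fS : ℤ[X] := ∑ s ∈ insert (0:ZMod n) S, (X:ℤ[X])^s.val with hfS
  set fZ : ℤ[X] := ∑ j ∈ Finset.range n, (X:ℤ[X])^j with hfZ
  obtain ⟨g, hg⟩ := tiling_poly n C.toFinset (insert (0:ZMod n) S) huniq
  have hprod : fC * fS = fZ + ((X:ℤ[X])^n - 1) * g := by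
    rw [← hg]; ring
  have hcardS0 : (insert (0:ZMod n) S).card = p := by
    rw [Finset.card_insert_of_notMem h0S, hcard]
    have := hp.two_le
    omega
  have hfS1 : fS.eval 1 = (p:ℤ) := by
    rw [hfS]
    simp [eval_finset_sum, hcardS0]
  have hfZ1 : fZ.eval 1 = (n:ℤ) := by
    rw [hfZ]
    simp [eval_finset_sum]
  set Np : ℕ := C.toFinset.card with hNp
  have hfC1 : fC.eval 1 = (Np:ℤ) := by
    rw [hfC]
    simp [eval_finset_sum]
    rw [hNp, Set.toFinset_card]
    rw [Set.ncard_eq_toFinset_card', Set.toFinset_card]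
  have hn1 : (n:ℤ) = (p:ℤ) * (Np:ℤ) := by
    have := congrArg (Polynomial.eval (1:ℤ)) hprod
    simp only [eval_mul, eval_add, eval_sub, eval_pow, eval_X, eval_one, one_pow,
      sub_self, zero_mul, add_zero] at this
    rw [hfS1, hfZ1, hfC1] at this
    linarith
  have hNpn : n = p * Np := by exact_mod_cast hn1
  have hNp0 : Np ≠ 0 := by
    intro hc
    rw [hc, Nat.mul_zero] at hNpn
    omega
  by_contra hmain
  -- dichotomy step
  have step : ∀ m : ℕ, p^(m+1) ∣ n →
      cyclotomic (p^(m+1)) ℤ ∣ fC ∨ cyclotomic (p^(m+1)) ℤ ∣ fS := by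
    intro m hdvdn
    have hpos : 0 < p^(m+1) := pow_pos hp.pos _
    have hprime : Prime (cyclotomic (p^(m+1)) ℤ) :=
      UniqueFactorizationMonoid.irreducible_iff_prime.mp (cyclotomic.irreducible hpos)
    have hdXn : cyclotomic (p^(m+1)) ℤ ∣ (X:ℤ[X])^n - 1 := by
      obtain ⟨t, ht⟩ := hdvdn
      refine dvd_trans (cyclotomic.dvd_X_pow_sub_one _ ℤ) ?_
      rw [ht, pow_mul]
      simpa using sub_dvd_pow_sub_pow ((X:ℤ[X])^(p^(m+1))) 1 t
    have hdegΦ : ((X:ℤ[X]) - 1).degree < (cyclotomic (p^(m+1)) ℤ).degree := by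
      rw [degree_cyclotomic]
      have htot : (p^(m+1)).totient = p^m * (p - 1) :=
        Nat.totient_prime_pow hp (Nat.succ_pos m)
      have h2 : 2 ≤ (p^(m+1)).totient := by
        rw [htot]
        have h1 : 1 ≤ p^m := Nat.one_le_pow _ _ hp.pos
        have hp2 : 2 ≤ p - 1 := by omega
        exact le_trans hp2 (Nat.le_mul_of_pos_left _ h1)
      have hXdeg : ((X:ℤ[X]) - 1).degree = 1 := by
        have : ((X:ℤ[X]) - 1) = X - Polynomial.C 1 := by simp
        rw [this, degree_X_sub_C]
      rw [hXdeg]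
      exact_mod_cast Nat.lt_of_lt_of_le one_lt_two h2
    have hX1ne : ((X:ℤ[X]) - 1) ≠ 0 := by
      intro hc
      have := congrArg (Polynomial.eval (2:ℤ)) hc
      simp at this
    have hdfZ : cyclotomic (p^(m+1)) ℤ ∣ fZ := by
      have hmul : fZ * ((X:ℤ[X]) - 1) = (X:ℤ[X])^n - 1 := by
        rw [hfZ]; exact geom_sum_mul _ n
      have hdd : cyclotomic (p^(m+1)) ℤ ∣ fZ * ((X:ℤ[X]) - 1) := by rw [hmul]; exact hdXn
      rcases hprime.dvd_mul.mp hdd with h | h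
      · exact h
      · exact absurd (eq_zero_of_dvd_of_degree_lt h hdegΦ) hX1ne
    have hdprod : cyclotomic (p^(m+1)) ℤ ∣ fC * fS := by
      rw [hprod]
      exact dvd_add hdfZ (hdXn.mul_right g)
    exact hprime.dvd_mul.mp hdprod
  -- ruling out the fS branch for m ≥ 1
  have ruleout : ∀ m : ℕ, 1 ≤ m → ¬ (cyclotomic (p^(m+1)) ℤ ∣ fS) := by
    intro m hm hdvd
    have hrw : cyclotomic (p^(m+1)) ℤ = ∑ i ∈ Finset.range p, (X:ℤ[X])^(p^m * i) := by
      rw [cyclotomic_prime_pow_eq_geom_sum hp]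
      exact Finset.sum_congr rfl fun i _ => by rw [← pow_mul]
    set T : Finset ℕ := (insert (0:ZMod n) S).image ZMod.val with hT
    have hTcard : T.card = p := by
      rw [hT, Finset.card_image_of_injective _ (ZMod.val_injective n), hcardS0]
    have h0T : 0 ∈ T := by
      rw [hT]
      refine Finset.mem_image.mpr ⟨0, Finset.mem_insert_self _ _, ?_⟩
      exact ZMod.val_zero
    have hsum : ∑ e ∈ T, (X:ℤ[X])^e = fS := by
      rw [hT, Finset.sum_image (fun x _ y _ h => ZMod.val_injective n h), hfS]
    have hallk := keyC p (p^m) hp (pow_pos hp.pos m) T hTcard h0T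
      (by rw [hsum, ← hrw]; exact hdvd)
    refine gen_contra p n hp ⟨Np, hNpn⟩ S ?_ hgen
    intro s hs
    have hsT : s.val ∈ T := by
      rw [hT]
      exact Finset.mem_image.mpr ⟨s, Finset.mem_insert_of_mem hs, rfl⟩
    exact dvd_trans (dvd_pow_self p (Nat.one_le_iff_ne_zero.mp hm)) (hallk s.val hsT)
  -- geometric sums
  have hGmul : ∀ m : ℕ, (∑ j ∈ Finset.range (p^(m+1)), (X:ℤ[X])^j) =
      (∑ j ∈ Finset.range (p^m), (X:ℤ[X])^j) * cyclotomic (p^(m+1)) ℤ := by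
    intro m
    haveI : Fact p.Prime := ⟨hp⟩
    have h1 : (∑ j ∈ Finset.range (p^(m+1)), (X:ℤ[X])^j) * ((X:ℤ[X]) - 1)
        = (X:ℤ[X])^(p^(m+1)) - 1 := geom_sum_mul _ _
    have h2 : ((∑ j ∈ Finset.range (p^m), (X:ℤ[X])^j) * cyclotomic (p^(m+1)) ℤ)
        * ((X:ℤ[X]) - 1) = (X:ℤ[X])^(p^(m+1)) - 1 := by
      have h3 := cyclotomic_prime_pow_mul_X_pow_sub_one ℤ p m
      calc ((∑ j ∈ Finset.range (p^m), (X:ℤ[X])^j) * cyclotomic (p^(m+1)) ℤ)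
          * ((X:ℤ[X]) - 1)
          = cyclotomic (p^(m+1)) ℤ * ((∑ j ∈ Finset.range (p^m), (X:ℤ[X])^j)
            * ((X:ℤ[X]) - 1)) := by ring
        _ = cyclotomic (p^(m+1)) ℤ * ((X:ℤ[X])^(p^m) - 1) := by rw [geom_sum_mul]
        _ = (X:ℤ[X])^(p^(m+1)) - 1 := h3
    have hX1ne : ((X:ℤ[X]) - 1) ≠ 0 := by
      intro hc
      have := congrArg (Polynomial.eval (2:ℤ)) hc
      simp at this
    exact mul_right_cancel₀ hX1ne (h1.trans h2.symm)
  have hGeval : ∀ m : ℕ, (∑ j ∈ Finset.range (p^m), (X:ℤ[X])^j).eval 1 = ((p^m : ℕ) : ℤ) := by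
    intro m
    simp [eval_finset_sum]
  have hGdvd1 : ∀ m : ℕ, (∑ j ∈ Finset.range (p^m), (X:ℤ[X])^j) ∣ fC → p^m ∣ Np := by
    intro m ⟨t, ht⟩
    have := congrArg (Polynomial.eval (1:ℤ)) ht
    rw [hfC1, eval_mul, hGeval] at this
    have : ((p^m : ℕ) : ℤ) ∣ (Np : ℤ) := ⟨t.eval 1, this⟩
    exact_mod_cast this
  have hGne : ∀ m : ℕ, (∑ j ∈ Finset.range (p^m), (X:ℤ[X])^j) ≠ 0 := by
    intro m hc
    have := congrArg (Polynomial.eval (1:ℤ)) hc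
    rw [hGeval] at this
    simp at this
    have hppos : 0 < p := hp.pos
    omega
  have hGdeg : ∀ m : ℕ, (∑ j ∈ Finset.range (p^m), (X:ℤ[X])^j).natDegree
      < (cyclotomic (p^(m+1)) ℤ).natDegree := by
    intro m
    have h2 : (cyclotomic (p^(m+1)) ℤ).natDegree = p^m * (p-1) := by
      rw [natDegree_cyclotomic, Nat.totient_prime_pow hp (Nat.succ_pos m)]
      simp
    have h1 : (∑ j ∈ Finset.range (p^m), (X:ℤ[X])^j).natDegree + 1 = p^m := by
      have hmul : (∑ j ∈ Finset.range (p^m), (X:ℤ[X])^j) * ((X:ℤ[X]) - 1)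
          = (X:ℤ[X])^(p^m) - 1 := geom_sum_mul _ _
      have hX1ne : ((X:ℤ[X]) - 1) ≠ 0 := by
        intro hc
        have := congrArg (Polynomial.eval (2:ℤ)) hc
        simp at this
      have hd := natDegree_mul (hGne m) hX1ne
      rw [hmul] at hd
      have hXm : ((X:ℤ[X])^(p^m) - 1).natDegree = p^m := by
        have : ((X:ℤ[X])^(p^m) - 1) = (X:ℤ[X])^(p^m) - Polynomial.C 1 := by simp
        rw [this, natDegree_X_pow_sub_C]
      have hX1 : ((X:ℤ[X]) - 1).natDegree = 1 := by
        have : ((X:ℤ[X]) - 1) = (X:ℤ[X]) - Polynomial.C 1 := by simp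
        rw [this, natDegree_X_sub_C]
      omega
    have hp1 : 1 ≤ p^m := Nat.one_le_pow _ _ hp.pos
    have hp2 : 2 ≤ p - 1 := by omega
    nlinarith
  -- the main induction
  have main : ∀ k : ℕ, (∑ j ∈ Finset.range (p^k), (X:ℤ[X])^j) ∣ fC := by
    intro k
    induction k with
    | zero =>
      simp
    | succ m ihm =>
      have hNdvd : p^m ∣ Np := hGdvd1 m ihm
      have hpn : p^(m+1) ∣ n := by
        rw [hNpn, pow_succ']
        exact mul_dvd_mul_left p hNdvd
      have hpos : 0 < p^(m+1) := pow_pos hp.pos _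
      have hprime : Prime (cyclotomic (p^(m+1)) ℤ) :=
        UniqueFactorizationMonoid.irreducible_iff_prime.mp (cyclotomic.irreducible hpos)
      have hΦC : cyclotomic (p^(m+1)) ℤ ∣ fC := by
        rcases step m hpn with h | h
        · exact h
        · rcases Nat.eq_zero_or_pos m with rfl | hm
          · exact absurd (by simpa using h) hmain
          · exact absurd h (ruleout m hm)
      obtain ⟨a, ha⟩ := ihm
      have hΦa : cyclotomic (p^(m+1)) ℤ ∣ a := by
        have hd : cyclotomic (p^(m+1)) ℤ ∣ (∑ j ∈ Finset.range (p^m), (X:ℤ[X])^j) * a := by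
          rw [← ha]; exact hΦC
        rcases hprime.dvd_mul.mp hd with h | h
        · exfalso
          have := eq_zero_of_dvd_of_degree_lt h (degree_lt_degree (hGdeg m))
          exact hGne m this
        · exact h
      obtain ⟨b, hb⟩ := hΦa
      exact ⟨b, by rw [ha, hb, hGmul m]; ring⟩
  -- final contradiction
  have hle : ∀ k : ℕ, p^k ≤ Np := fun k =>
    Nat.le_of_dvd (Nat.pos_of_ne_zero hNp0) (hGdvd1 k (main k))
  have hlt : Np < p^Np := Nat.lt_pow_self (n := Np) hp.one_lt
  exact absurd (hle Np) (not_le.mpr hlt)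


/-- The circulant graph `Cay(Z_n, S)`: vertices are `ZMod n`, and `u, v` are adjacent
iff `v - u ∈ S` (here symmetrised; when `S = -S` this agrees with the usual definition). -/
def circulantGraph (n : ℕ) (S : Finset (ZMod n)) : SimpleGraph (ZMod n) :=
  SimpleGraph.fromRel (fun u v => v - u ∈ S)

/-- `C` is a perfect code in `G`: an independent set such that every vertex outside `C`
is adjacent to exactly one vertex of `C`. -/
def IsPerfectCode {V : Type*} (G : SimpleGraph V) (C : Set V) : Prop :=
  (∀ u ∈ C, ∀ v ∈ C, ¬ G.Adj u v) ∧ ∀ v, v ∉ C → ∃! c, c ∈ C ∧ G.Adj v c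

/-- `C` is a total perfect code in `G`: every vertex is adjacent to exactly one vertex of `C`. -/
def IsTotalPerfectCode {V : Type*} (G : SimpleGraph V) (C : Set V) : Prop :=
  ∀ v, ∃! c, c ∈ C ∧ G.Adj v c

/-- In the proof of Theorem 1.1: if the connected circulant graph `Cay(Z_n, S)` of degree
`p - 1` (`p` an odd prime) admits a perfect code, then the `p`-th cyclotomic polynomial
`λ_p(x)` divides `f_{S∪{0}}(x)` in `ℤ[x]`. -/
theorem cyclotomic_prime_dvd_fS_of_perfectCode
    (p n : ℕ) (hp : p.Prime) (hodd : Odd p) (hn : 0 < n)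
    (S : Finset (ZMod n)) (h0S : (0 : ZMod n) ∉ S) (hSneg : ∀ s ∈ S, -s ∈ S)
    (hcard : S.card = p - 1)
    (hgen : AddSubgroup.closure (S : Set (ZMod n)) = ⊤)
    (hex : ∃ C : Set (ZMod n), IsPerfectCode (circulantGraph n S) C) :
    Polynomial.cyclotomic p ℤ ∣ ∑ s ∈ insert (0 : ZMod n) S, (X : ℤ[X]) ^ s.val := by
  exact cyclotomic_prime_dvd_fS_of_perfectCode' p n hp hodd hn S h0S hSneg hcard hgen hex
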